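/- For n ≥ 2, the automorphism group of the face lattice of the n-dimensional associahedron A_n is isomorphic to the dihedral group D_{n+3} of order 2(n+3), induced by the symmetries of the underlying (n+3)-gon. -/
import Mathlib

set_option linter.unusedSectionVars false
set_option linter.unusedVariables false


namespace Colorful

/-- `x` lies strictly inside the (counterclockwise) arc from `a` to `b` of a convex
`m`-gon whose vertices are labeled by `ZMod m` in cyclic order. -/
def StrictArc (m : ℕ) (a b x : ZMod m) : Prop :=
  0 < (x - a).val ∧ (x - a).val < (b - a).val

/-- `d` is a diagonal of the convex `m`-gon: an unordered pair of distinct,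
non-adjacent vertices. -/
def IsDiag (m : ℕ) (d : Finset (ZMod m)) : Prop :=
  ∃ a b : ZMod m, d = {a, b} ∧ a ≠ b ∧ a ≠ b + 1 ∧ b ≠ a + 1

/-- Two diagonals of the convex `m`-gon cross (in their interiors). -/
def Cross (m : ℕ) (d e : Finset (ZMod m)) : Prop :=
  ∃ a b c c' : ZMod m, d = {a, b} ∧ e = {c, c'} ∧
    StrictArc m a b c ∧ StrictArc m b a c'

/-- A triangulation of the convex `m`-gon: a maximal family of pairwise
noncrossing diagonals; equivalently it consists of exactly `m - 3` diagonals. -/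
def IsTriangulation (m : ℕ) (s : Finset (Finset (ZMod m))) : Prop :=
  (∀ d ∈ s, IsDiag m d) ∧ (∀ d ∈ s, ∀ e ∈ s, d ≠ e → ¬ Cross m d e) ∧
    s.card = m - 3

/-- A (partial) dissection of the convex `m`-gon: a set of pairwise noncrossing
diagonals. The faces of the associahedron correspond to dissections, ordered by
reverse inclusion of the diagonal sets. -/
def Dissection (m : ℕ) (s : Finset (Finset (ZMod m))) : Prop :=
  (∀ d ∈ s, IsDiag m d) ∧ ∀ d ∈ s, ∀ e ∈ s, d ≠ e → ¬ Cross m d e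

/-- A short diagonal: one whose endpoints are two steps apart on the boundary. -/
def IsShort (m : ℕ) (d : Finset (ZMod m)) : Prop :=
  ∃ j : ZMod m, d = {j - 1, j + 1}

section Arith
variable {m : ℕ} [NeZero m]

lemma pair_eq_pair_iff {α : Type*} [DecidableEq α] {a b c d : α} :
    ({a, b} : Finset α) = {c, d} ↔ (a = c ∧ b = d) ∨ (a = d ∧ b = c) := by
  rw [← Finset.coe_inj]
  push_cast
  exact Set.pair_eq_pair_iff

lemma val_pos_of_ne {a b : ZMod m} (h : b ≠ a) : 0 < (b - a).val :=
  ZMod.val_pos.2 (sub_ne_zero.2 h)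

lemma val_add_val {a b : ZMod m} (h : a ≠ b) : (b - a).val + (a - b).val = m := by
  have h0 : ((b - a) + (a - b)) = 0 := by ring
  have h1 : ((b - a) + (a - b)).val = ((b - a).val + (a - b).val) % m := ZMod.val_add _ _
  rw [h0, ZMod.val_zero] at h1
  have h2 : 0 < (b - a).val := val_pos_of_ne h.symm
  have h3 : 0 < (a - b).val := val_pos_of_ne h
  have h4 : (b - a).val < m := ZMod.val_lt _
  have h5 : (a - b).val < m := ZMod.val_lt _
  obtain ⟨k, hk⟩ := Nat.dvd_of_mod_eq_zero h1.symm
  rcases k with _ | _ | k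
  · omega
  · omega
  · exfalso; nlinarith

lemma val_eq_one_iff (hm : 5 ≤ m) {z : ZMod m} : z.val = 1 ↔ z = 1 := by
  haveI : Fact (1 < m) := ⟨by omega⟩
  constructor
  · intro h
    have := ZMod.val_injective m (a₁ := z) (a₂ := 1)
    exact this (by rw [h, ZMod.val_one])
  · rintro rfl; exact ZMod.val_one m

lemma val_neg_one' (hm : 5 ≤ m) : (-1 : ZMod m).val = m - 1 := by
  haveI : Fact (1 < m) := ⟨by omega⟩
  have h : ((1 : ZMod m)) ≠ 0 := by
    haveI : Fact (1 < m) := ⟨by omega⟩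
    intro hh; have h0 := ZMod.val_one m; rw [hh, ZMod.val_zero] at h0; omega
  have hv := val_add_val (a := (1 : ZMod m)) (b := 0) (fun hh => h hh)
  have h1 : ((1 : ZMod m)).val = 1 := ZMod.val_one m
  rw [zero_sub, sub_zero] at hv
  omega

lemma val_add_one (hm : 5 ≤ m) {z : ZMod m} (h : z ≠ -1) : (z + 1).val = z.val + 1 := by
  haveI : Fact (1 < m) := ⟨by omega⟩
  have h1 : (z + 1).val = (z.val + 1) % m := by
    rw [ZMod.val_add, ZMod.val_one]
  have h2 : z.val < m := ZMod.val_lt _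
  have h3 : z.val ≠ m - 1 := by
    intro hh
    apply h
    apply ZMod.val_injective
    rw [hh, val_neg_one' hm]
  rw [h1, Nat.mod_eq_of_lt (by omega)]

lemma val_sub_one (hm : 5 ≤ m) {z : ZMod m} (h : z ≠ 0) : (z - 1).val + 1 = z.val := by
  have h1 : z - 1 ≠ -1 := by
    intro hh; apply h; have : z = -1 + 1 := by rw [← hh]; ring
    rw [this]; ring
  have := val_add_one hm h1
  rw [sub_add_cancel] at this
  omega

lemma val_two (hm : 5 ≤ m) : (2 : ZMod m).val = 2 := by
  have : ((2 : ℕ) : ZMod m).val = 2 := ZMod.val_cast_of_lt (by omega)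
  simpa using this

lemma natCast_ne_zero (hm : 5 ≤ m) {k : ℕ} (h1 : 0 < k) (h2 : k < m) : (k : ZMod m) ≠ 0 := by
  intro h
  have := ZMod.val_cast_of_lt (n := m) h2
  rw [h, ZMod.val_zero] at this
  omega

lemma two_ne_zero' (hm : 5 ≤ m) : (2 : ZMod m) ≠ 0 := by
  have := natCast_ne_zero hm (k := 2) (by omega) (by omega)
  simpa using this

lemma val_sub_val {u v : ZMod m} (h : v.val ≤ u.val) : (u - v).val = u.val - v.val := by
  have hu : u = (u - v) + v := by ring
  have h1 : u.val = ((u - v).val + v.val) % m := by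
    conv_lhs => rw [hu]
    exact ZMod.val_add _ _
  have h2 : (u - v).val < m := ZMod.val_lt _
  have h3 : v.val < m := ZMod.val_lt _
  have h4 : u.val < m := ZMod.val_lt _
  rcases Nat.lt_or_ge ((u - v).val + v.val) m with hlt | hge
  · rw [Nat.mod_eq_of_lt hlt] at h1; omega
  · have : ((u - v).val + v.val) % m = (u - v).val + v.val - m := by
      have : ((u - v).val + v.val) - m < m := by omega
      rw [Nat.mod_eq_sub_mod (by omega), Nat.mod_eq_of_lt this]
    omega

lemma sub_inj {a b x : ZMod m} (h : (x - a).val = (b - a).val) : x = b := by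
  have := ZMod.val_injective m h
  have h2 : x - a + a = b - a + a := by rw [this]
  simpa using h2

end Arith

section Arc
variable {m : ℕ} [NeZero m]

lemma StrictArc.ne_left {a b x : ZMod m} (h : StrictArc m a b x) : x ≠ a := by
  intro hh
  have h1 := h.1
  rw [hh, sub_self, ZMod.val_zero] at h1
  exact absurd h1 (lt_irrefl 0)

lemma StrictArc.ne_right {a b x : ZMod m} (h : StrictArc m a b x) : x ≠ b := by
  intro hh
  rw [hh] at h
  exact absurd h.2 (lt_irrefl _)

lemma StrictArc.base_ne {a b x : ZMod m} (h : StrictArc m a b x) : a ≠ b := by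
  intro hh
  have h2 := h.1.trans h.2
  rw [hh, sub_self, ZMod.val_zero] at h2
  exact absurd h2 (by omega)

lemma not_strictArc_both {a b x : ZMod m} (h1 : StrictArc m a b x) (h2 : StrictArc m b a x) :
    False := by
  have hab : a ≠ b := h1.base_ne
  have hsum := val_add_val hab
  obtain ⟨h1a, h1b⟩ := h1
  obtain ⟨h2a, h2b⟩ := h2
  have key : (x - a).val = ((x - b).val + (b - a).val) % m := by
    have hh : x - a = (x - b) + (b - a) := by ring
    rw [hh, ZMod.val_add]
  rw [Nat.mod_eq_of_lt (by omega)] at key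
  omega

end Arc


section CrossLemmas
variable {m : ℕ} [NeZero m]

lemma mem_pair {α : Type*} [DecidableEq α] {x a b : α} :
    x ∈ ({a, b} : Finset α) ↔ x = a ∨ x = b := by simp

lemma diag_two_le (hm : 5 ≤ m) {a b : ZMod m} (hab : a ≠ b) (hba1 : b ≠ a + 1) :
    2 ≤ (b - a).val := by
  have pos := val_pos_of_ne hab.symm
  rcases Nat.lt_or_ge (b - a).val 2 with h | h
  · exfalso
    have h1 : (b - a).val = 1 := by omega
    have : b - a = 1 := (val_eq_one_iff hm).1 h1
    exact hba1 (by linear_combination this)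
  · exact h

lemma arc_two (hm : 5 ≤ m) {j x : ZMod m} (h : StrictArc m (j - 1) (j + 1) x) : x = j := by
  have h2 : (j + 1 - (j - 1)) = (2 : ZMod m) := by ring
  have hval : (x - (j - 1)).val = 1 := by
    have ha := h.1
    have hb := h.2
    rw [h2, val_two hm] at hb
    omega
  have hx : x - (j - 1) = 1 := (val_eq_one_iff hm).1 hval
  linear_combination hx

lemma strictArc_add_one (hm : 5 ≤ m) {a b : ZMod m} (hab : a ≠ b) (hba1 : b ≠ a + 1) :
    StrictArc m a b (a + 1) := by
  have hv : (a + 1 - a : ZMod m).val = 1 := by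
    rw [show a + 1 - a = (1 : ZMod m) from by ring]
    exact (val_eq_one_iff hm).2 rfl
  have h2 := diag_two_le hm hab hba1
  exact ⟨by omega, by omega⟩

lemma strictArc_sub_one (hm : 5 ≤ m) {a b : ZMod m} (hab : a ≠ b) (hba1 : b ≠ a + 1) :
    StrictArc m a b (b - 1) := by
  have hne : b - a ≠ 0 := sub_ne_zero.2 hab.symm
  have hv := val_sub_one hm hne
  rw [show b - a - 1 = b - 1 - a from by ring] at hv
  have h2 := diag_two_le hm hab hba1
  exact ⟨by omega, by omega⟩

lemma strictArc_add_two (hm : 5 ≤ m) {a b : ZMod m} (h3 : 3 ≤ (b - a).val) :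
    StrictArc m a b (a + 2) := by
  have hv : (a + 2 - a : ZMod m).val = 2 := by
    rw [show a + 2 - a = (2 : ZMod m) from by ring]
    exact val_two hm
  exact ⟨by omega, by omega⟩

lemma cross_disjoint {d e : Finset (ZMod m)} (h : Cross m d e) {x : ZMod m}
    (hd : x ∈ d) (he : x ∈ e) : False := by
  obtain ⟨a, b, c, c', rfl, rfl, h1, h2⟩ := h
  rcases mem_pair.1 hd with rfl | rfl
  · rcases mem_pair.1 he with he' | he'
    · exact h1.ne_left he'.symm
    · exact h2.ne_right he'.symm
  · rcases mem_pair.1 he with he' | he'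
    · exact h1.ne_right he'.symm
    · exact h2.ne_left he'.symm

lemma sep1 (hm : 5 ≤ m) {a b j : ZMod m} (h1 : StrictArc m a b (j - 1))
    (h2 : StrictArc m b a (j + 1)) : j = a ∨ j = b := by
  by_contra hcon
  push_neg at hcon
  obtain ⟨hja, hjb⟩ := hcon
  have hne1 : j - 1 - a ≠ -1 := fun hh => hja (by linear_combination hh)
  have hv1 := val_add_one hm hne1
  rw [show j - 1 - a + 1 = j - a from by ring] at hv1
  have hlt1 : (j - a).val ≤ (b - a).val := by
    have := h1.2; omega
  have hne2 : (j - a).val ≠ (b - a).val := fun hh => hjb (sub_inj hh)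
  have harc1 : StrictArc m a b j := ⟨by have := h1.1; omega, by omega⟩
  have hne3 : j + 1 - b ≠ 0 := ZMod.val_pos.1 h2.1
  have hv2 := val_sub_one hm hne3
  rw [show j + 1 - b - 1 = j - b from by ring] at hv2
  have hpos2 : 0 < (j - b).val := by
    rcases Nat.eq_zero_or_pos (j - b).val with hz | hp
    · exfalso
      apply hjb
      have hz' : j - b = 0 := (ZMod.val_eq_zero _).1 hz
      linear_combination hz'
    · exact hp
  have harc2 : StrictArc m b a j := ⟨hpos2, by have := h2.2; omega⟩
  exact not_strictArc_both harc1 harc2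

lemma sep2 (hm : 5 ≤ m) {a b j : ZMod m} (h1 : StrictArc m a b (j + 1))
    (h2 : StrictArc m b a (j - 1)) : j = a ∨ j = b := by
  by_contra hcon
  push_neg at hcon
  obtain ⟨hja, hjb⟩ := hcon
  have hne1 : j + 1 - a ≠ 0 := ZMod.val_pos.1 h1.1
  have hv1 := val_sub_one hm hne1
  rw [show j + 1 - a - 1 = j - a from by ring] at hv1
  have hpos1 : 0 < (j - a).val := by
    rcases Nat.eq_zero_or_pos (j - a).val with hz | hp
    · exfalso
      apply hja
      have hz' : j - a = 0 := (ZMod.val_eq_zero _).1 hz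
      linear_combination hz'
    · exact hp
  have harc1 : StrictArc m a b j := ⟨hpos1, by have := h1.2; omega⟩
  have hne2 : j - 1 - b ≠ -1 := fun hh => hjb (by linear_combination hh)
  have hv2 := val_add_one hm hne2
  rw [show j - 1 - b + 1 = j - b from by ring] at hv2
  have hle2 : (j - b).val ≤ (a - b).val := by
    have := h2.2; omega
  have hne4 : (j - b).val ≠ (a - b).val := fun hh => hja (sub_inj hh)
  have harc2 : StrictArc m b a j := ⟨by have := h2.1; omega, by omega⟩
  exact not_strictArc_both harc1 harc2

lemma cross_short_elim1 (hm : 5 ≤ m) {a b j : ZMod m}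
    (h : Cross m {a, b} {j - 1, j + 1}) : j ∈ ({a, b} : Finset (ZMod m)) := by
  obtain ⟨a', b', c, c', hd, he, h1, h2⟩ := h
  rcases pair_eq_pair_iff.1 he with ⟨hc, hc'⟩ | ⟨hc, hc'⟩
  · rw [← hc] at h1
    rw [← hc'] at h2
    have := sep1 hm h1 h2
    rw [hd, mem_pair]
    exact this
  · rw [← hc'] at h1
    rw [← hc] at h2
    have := sep2 hm h1 h2
    rw [hd, mem_pair]
    exact this

lemma cross_short_elim2 (hm : 5 ≤ m) {d : Finset (ZMod m)} {j : ZMod m}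
    (h : Cross m {j - 1, j + 1} d) : j ∈ d := by
  obtain ⟨a, b, c, c', hd, he, h1, h2⟩ := h
  rcases pair_eq_pair_iff.1 hd with ⟨ha, hb⟩ | ⟨ha, hb⟩
  · rw [← ha, ← hb] at h1
    have : c = j := arc_two hm h1
    rw [he, mem_pair]
    exact Or.inl this.symm
  · rw [← ha, ← hb] at h2
    have : c' = j := arc_two hm h2
    rw [he, mem_pair]
    exact Or.inr this.symm

lemma cross_to_short (hm : 5 ≤ m) {a b j : ZMod m} (hab : a ≠ b) (hab1 : a ≠ b + 1)
    (hba1 : b ≠ a + 1) (hj : j = a ∨ j = b) :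
    Cross m {a, b} {j - 1, j + 1} := by
  rcases hj with h | h
  · rw [h]
    exact ⟨a, b, a + 1, a - 1, rfl, Finset.pair_comm _ _,
      strictArc_add_one hm hab hba1, strictArc_sub_one hm hab.symm hab1⟩
  · rw [h]
    exact ⟨a, b, b - 1, b + 1, rfl, rfl,
      strictArc_sub_one hm hab hba1, strictArc_add_one hm hab.symm hab1⟩

/-- Two diagonals are compatible if they do not cross in either order. -/
def Compat (m : ℕ) (d e : Finset (ZMod m)) : Prop := ¬ Cross m d e ∧ ¬ Cross m e d

lemma not_compat_short_iff (hm : 5 ≤ m) {d : Finset (ZMod m)} {j : ZMod m}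
    (hd : IsDiag m d) : ¬ Compat m d {j - 1, j + 1} ↔ j ∈ d := by
  constructor
  · intro h
    rw [Compat, not_and_or, not_not, not_not] at h
    rcases h with h | h
    · obtain ⟨a, b, rfl, h1, h2, h3⟩ := hd
      exact cross_short_elim1 hm h
    · exact cross_short_elim2 hm h
  · intro h hc
    obtain ⟨a, b, rfl, h1, h2, h3⟩ := hd
    exact hc.1 (cross_to_short hm h1 h2 h3 (mem_pair.1 h))

lemma compat_self {d : Finset (ZMod m)} (hd : IsDiag m d) : Compat m d d := by
  obtain ⟨a, b, rfl, h1, h2, h3⟩ := hd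
  constructor <;> intro h <;>
    exact cross_disjoint h (Finset.mem_insert_self a {b}) (Finset.mem_insert_self a {b})

lemma compat_of_shared {d e : Finset (ZMod m)} {x : ZMod m} (hd : x ∈ d) (he : x ∈ e) :
    Compat m d e :=
  ⟨fun h => cross_disjoint h hd he, fun h => cross_disjoint h he hd⟩

end CrossLemmas

section ShortChar
variable {m : ℕ} [NeZero m]

lemma compat_comm {d e : Finset (ZMod m)} (h : Compat m d e) : Compat m e d := ⟨h.2, h.1⟩

lemma one_ne_zero' (hm : 5 ≤ m) : (1 : ZMod m) ≠ 0 := by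
  have := natCast_ne_zero (m := m) hm (k := 1) (by omega) (by omega)
  simpa using this

lemma three_ne_zero' (hm : 5 ≤ m) : (3 : ZMod m) ≠ 0 := by
  have := natCast_ne_zero (m := m) hm (k := 3) (by omega) (by omega)
  simpa using this

lemma four_ne_zero' (hm : 5 ≤ m) : (4 : ZMod m) ≠ 0 := by
  have := natCast_ne_zero (m := m) hm (k := 4) (by omega) (by omega)
  simpa using this

lemma isDiag_short (hm : 5 ≤ m) (j : ZMod m) : IsDiag m {j - 1, j + 1} :=
  ⟨j - 1, j + 1, rfl,
    fun h => two_ne_zero' hm (by linear_combination -h),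
    fun h => three_ne_zero' hm (by linear_combination -h),
    fun h => one_ne_zero' hm (by linear_combination h)⟩

lemma short_inj (hm : 5 ≤ m) {j k : ZMod m}
    (h : ({j - 1, j + 1} : Finset (ZMod m)) = {k - 1, k + 1}) : j = k := by
  rcases pair_eq_pair_iff.1 h with ⟨h1, h2⟩ | ⟨h1, h2⟩
  · linear_combination h1
  · exact absurd (by linear_combination h2 - h1 : (4 : ZMod m) = 0) (four_ne_zero' hm)

lemma short_iff_val (hm : 5 ≤ m) {a b : ZMod m} (hab : a ≠ b) (hab1 : a ≠ b + 1)
    (hba1 : b ≠ a + 1) :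
    IsShort m {a, b} ↔ ((b - a).val = 2 ∨ (a - b).val = 2) := by
  constructor
  · rintro ⟨j, hj⟩
    rcases pair_eq_pair_iff.1 hj with ⟨h1, h2⟩ | ⟨h1, h2⟩
    · left
      rw [show b - a = (2 : ZMod m) from by linear_combination h2 - h1]
      exact val_two hm
    · right
      rw [show a - b = (2 : ZMod m) from by linear_combination h1 - h2]
      exact val_two hm
  · intro h
    rcases h with h | h
    · refine ⟨a + 1, ?_⟩
      have h2 : b - a = 2 := by
        apply ZMod.val_injective m
        rw [h, val_two hm]
      have hb : b = a + 2 := by linear_combination h2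
      rw [hb, show a + 1 - 1 = a from by ring, show a + 1 + 1 = a + 2 from by ring]
    · refine ⟨b + 1, ?_⟩
      have h2 : a - b = 2 := by
        apply ZMod.val_injective m
        rw [h, val_two hm]
      have ha : a = b + 2 := by linear_combination h2
      rw [Finset.pair_comm a b, ha, show b + 1 - 1 = b from by ring,
        show b + 1 + 1 = b + 2 from by ring]

lemma nonshort_wide (hm : 5 ≤ m) {a b : ZMod m} (hab : a ≠ b) (hab1 : a ≠ b + 1)
    (hba1 : b ≠ a + 1) (h : ¬ IsShort m {a, b}) :
    3 ≤ (b - a).val ∧ 3 ≤ (a - b).val := by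
  have h2 := diag_two_le hm hab hba1
  have h2' := diag_two_le hm hab.symm hab1
  rw [short_iff_val hm hab hab1 hba1] at h
  push_neg at h
  omega

lemma short_char (hm : 5 ≤ m) {d : Finset (ZMod m)} (hd : IsDiag m d) :
    IsShort m d ↔ ∀ e1 e2 : Finset (ZMod m), IsDiag m e1 → IsDiag m e2 →
      ¬ Compat m d e1 → ¬ Compat m d e2 → e1 ≠ e2 → Compat m e1 e2 := by
  constructor
  · rintro ⟨j, rfl⟩ e1 e2 he1 he2 hc1 hc2 hne
    have m1 : j ∈ e1 := (not_compat_short_iff hm he1).1 (fun hc => hc1 (compat_comm hc))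
    have m2 : j ∈ e2 := (not_compat_short_iff hm he2).1 (fun hc => hc2 (compat_comm hc))
    exact compat_of_shared m1 m2
  · intro hchar
    by_contra hns
    obtain ⟨a, b, rfl, hab, hab1, hba1⟩ := hd
    obtain ⟨h3, h3'⟩ := nonshort_wide hm hab hab1 hba1 hns
    have hab' : a + 1 ≠ b + 1 := fun h => hab (by linear_combination h)
    have he1 : IsDiag m {a + 1, b + 1} :=
      ⟨a + 1, b + 1, rfl, hab',
        fun h => hab1 (by linear_combination h), fun h => hba1 (by linear_combination h)⟩
    have he2 : IsDiag m {a + 2, b + 2} :=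
      ⟨a + 2, b + 2, rfl, fun h => hab (by linear_combination h),
        fun h => hab1 (by linear_combination h), fun h => hba1 (by linear_combination h)⟩
    have hcr1 : Cross m {a, b} {a + 1, b + 1} :=
      ⟨a, b, a + 1, b + 1, rfl, rfl, strictArc_add_one hm hab hba1,
        strictArc_add_one hm hab.symm hab1⟩
    have hcr2 : Cross m {a, b} {a + 2, b + 2} :=
      ⟨a, b, a + 2, b + 2, rfl, rfl, strictArc_add_two hm h3, strictArc_add_two hm h3'⟩
    have harc1 : StrictArc m (a + 1) (b + 1) (a + 2) := by
      have := strictArc_add_one hm hab' (fun h => hba1 (by linear_combination h))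
      rwa [show a + 1 + 1 = a + 2 from by ring] at this
    have harc2 : StrictArc m (b + 1) (a + 1) (b + 2) := by
      have := strictArc_add_one hm hab'.symm (fun h => hab1 (by linear_combination h))
      rwa [show b + 1 + 1 = b + 2 from by ring] at this
    have hcr12 : Cross m {a + 1, b + 1} {a + 2, b + 2} :=
      ⟨a + 1, b + 1, a + 2, b + 2, rfl, rfl, harc1, harc2⟩
    have hne12 : ({a + 1, b + 1} : Finset (ZMod m)) ≠ {a + 2, b + 2} := by
      intro h
      rcases pair_eq_pair_iff.1 h with ⟨h1, h2⟩ | ⟨h1, h2⟩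
      · exact one_ne_zero' hm (by linear_combination -h1)
      · exact hba1 (by linear_combination h2)
    have := hchar _ _ he1 he2 (fun hc => hc.1 hcr1) (fun hc => hc.1 hcr2) hne12
    exact this.1 hcr12

end ShortChar

section Affine
variable {m : ℕ} [NeZero m]

def IsAff (m : ℕ) (p : ZMod m → ZMod m) : Prop :=
  (∃ c, ∀ x, p x = x + c) ∨ (∃ c, ∀ x, p x = -x + c)

lemma image_pair {α β : Type*} [DecidableEq α] [DecidableEq β] (f : α → β) (a b : α) :
    ({a, b} : Finset α).image f = {f a, f b} := by
  simp

lemma strictArc_add {a b x : ZMod m} (c : ZMod m) (h : StrictArc m a b x) :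
    StrictArc m (a + c) (b + c) (x + c) := by
  have e1 : (x + c) - (a + c) = x - a := by ring
  have e2 : (b + c) - (a + c) = b - a := by ring
  rw [StrictArc, e1, e2]
  exact h

lemma strictArc_neg {a b x c : ZMod m} (h : StrictArc m a b x) :
    StrictArc m (-b + c) (-a + c) (-x + c) := by
  have hxb : x ≠ b := h.ne_right
  obtain ⟨h1, h2⟩ := h
  have e1 : (-x + c) - (-b + c) = b - x := by ring
  have e2 : (-a + c) - (-b + c) = b - a := by ring
  rw [StrictArc, e1, e2]
  constructor
  · exact val_pos_of_ne (fun hh => hxb hh.symm)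
  · have e3 : b - x = (b - a) - (x - a) := by ring
    rw [e3, val_sub_val (le_of_lt h2)]
    omega

lemma cross_image {p : ZMod m → ZMod m} (hp : IsAff m p) {d e : Finset (ZMod m)}
    (h : Cross m d e) : Cross m (d.image p) (e.image p) := by
  obtain ⟨a, b, c1, c2, rfl, rfl, h1, h2⟩ := h
  rcases hp with ⟨c, hc⟩ | ⟨c, hc⟩
  · exact ⟨a + c, b + c, c1 + c, c2 + c, by rw [image_pair, hc, hc],
      by rw [image_pair, hc, hc], strictArc_add c h1, strictArc_add c h2⟩
  · refine ⟨-b + c, -a + c, -c1 + c, -c2 + c, ?_, by rw [image_pair, hc, hc],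
      strictArc_neg h1, strictArc_neg h2⟩
    rw [image_pair, hc, hc]
    exact Finset.pair_comm _ _

lemma isDiag_image {p : ZMod m → ZMod m} (hp : IsAff m p) {d : Finset (ZMod m)}
    (hd : IsDiag m d) : IsDiag m (d.image p) := by
  obtain ⟨a, b, rfl, hab, hab1, hba1⟩ := hd
  rw [image_pair]
  rcases hp with ⟨c, hc⟩ | ⟨c, hc⟩
  · exact ⟨a + c, b + c, by rw [hc, hc], fun h => hab (by linear_combination h),
      fun h => hab1 (by linear_combination h), fun h => hba1 (by linear_combination h)⟩
  · exact ⟨-a + c, -b + c, by rw [hc, hc], fun h => hab (by linear_combination -h),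
      fun h => hba1 (by linear_combination h), fun h => hab1 (by linear_combination h)⟩

lemma dissection_image {p q : ZMod m → ZMod m} (hp : IsAff m p) (hq : IsAff m q)
    (hqp : ∀ x, q (p x) = x) {s : Finset (Finset (ZMod m))} (hs : Dissection m s) :
    Dissection m (s.image (fun d => d.image p)) := by
  constructor
  · intro d' hd'
    obtain ⟨d, hd, rfl⟩ := Finset.mem_image.1 hd'
    exact isDiag_image hp (hs.1 d hd)
  · intro d' hd' e' he' hne hcr
    obtain ⟨d, hd, rfl⟩ := Finset.mem_image.1 hd'
    obtain ⟨e, he, rfl⟩ := Finset.mem_image.1 he'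
    have hde : d ≠ e := by rintro rfl; exact hne rfl
    have hcr2 := cross_image hq hcr
    rw [Finset.image_image, Finset.image_image] at hcr2
    have hqpid : (q ∘ p) = id := funext hqp
    rw [hqpid, Finset.image_id, Finset.image_id] at hcr2
    exact hs.2 d hd e he hde hcr2

end Affine

section Action
variable {m : ℕ} [NeZero m]

open DihedralGroup

def vmap : DihedralGroup m → ZMod m → ZMod m
  | DihedralGroup.r i => fun x => x - i
  | DihedralGroup.sr i => fun x => i - x

lemma vmap_aff (g : DihedralGroup m) : IsAff m (vmap g) := by
  cases g with
  | r i => exact Or.inl ⟨-i, fun x => by show x - i = x + -i; ring⟩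
  | sr i => exact Or.inr ⟨i, fun x => by show i - x = -x + i; ring⟩

lemma vmap_mul (g h : DihedralGroup m) (x : ZMod m) :
    vmap (g * h) x = vmap g (vmap h x) := by
  cases g with
  | r i =>
    cases h with
    | r j => rw [r_mul_r]; show x - (i + j) = x - j - i; ring
    | sr j => rw [r_mul_sr]; show (j - i) - x = (j - x) - i; ring
  | sr i =>
    cases h with
    | r j => rw [sr_mul_r]; show (i + j) - x = i - (x - j); ring
    | sr j => rw [sr_mul_sr]; show x - (j - i) = i - (j - x); ring

lemma vmap_one (x : ZMod m) : vmap (1 : DihedralGroup m) x = x := by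
  rw [one_def]
  show x - 0 = x
  ring

lemma vmap_inv_left (g : DihedralGroup m) (x : ZMod m) : vmap g⁻¹ (vmap g x) = x := by
  rw [← vmap_mul, inv_mul_cancel, vmap_one]

lemma vmap_inv_right (g : DihedralGroup m) (x : ZMod m) : vmap g (vmap g⁻¹ x) = x := by
  rw [← vmap_mul, mul_inv_cancel, vmap_one]

def fmap (p : ZMod m → ZMod m) (s : Finset (Finset (ZMod m))) : Finset (Finset (ZMod m)) :=
  s.image (fun d => d.image p)

lemma fmap_fmap (p q : ZMod m → ZMod m) (hqp : ∀ x, q (p x) = x)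
    (s : Finset (Finset (ZMod m))) : fmap q (fmap p s) = s := by
  rw [fmap, fmap, Finset.image_image]
  have h : ((fun d : Finset (ZMod m) => d.image q) ∘ fun d => d.image p) = id := by
    funext d
    simp only [Function.comp_apply, Finset.image_image]
    have : (q ∘ p) = id := funext hqp
    rw [this, Finset.image_id, id_eq]
  rw [h, Finset.image_id]

lemma fmap_mono {p : ZMod m → ZMod m} {s t : Finset (Finset (ZMod m))} (h : s ⊆ t) :
    fmap p s ⊆ fmap p t := Finset.image_subset_image h

def autOf (g : DihedralGroup m) :
    ({s : Finset (Finset (ZMod m)) // Dissection m s} ≃o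
     {s : Finset (Finset (ZMod m)) // Dissection m s}) where
  toFun s := ⟨fmap (vmap g) s.val,
    dissection_image (vmap_aff g) (vmap_aff g⁻¹) (vmap_inv_left g) s.prop⟩
  invFun s := ⟨fmap (vmap g⁻¹) s.val,
    dissection_image (vmap_aff g⁻¹) (vmap_aff g) (vmap_inv_right g) s.prop⟩
  left_inv s := Subtype.ext (fmap_fmap _ _ (vmap_inv_left g) _)
  right_inv s := Subtype.ext (fmap_fmap _ _ (vmap_inv_right g) _)
  map_rel_iff' := by
    intro s t
    constructor
    · intro h
      have h2 : fmap (vmap g) s.val ⊆ fmap (vmap g) t.val := h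
      have h3 := fmap_mono (p := vmap g⁻¹) h2
      rw [fmap_fmap _ _ (vmap_inv_left g), fmap_fmap _ _ (vmap_inv_left g)] at h3
      exact h3
    · intro h
      exact fmap_mono h

lemma autOf_mul (g h : DihedralGroup m) : autOf (g * h) = autOf g * autOf h := by
  refine DFunLike.ext _ _ fun s => ?_
  apply Subtype.ext
  show fmap (vmap (g * h)) s.val = fmap (vmap g) (fmap (vmap h) s.val)
  rw [fmap, fmap, fmap, Finset.image_image]
  congr 1
  funext d
  simp only [Function.comp_apply, Finset.image_image]
  congr 1
  funext x
  simp only [Function.comp_apply]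
  exact vmap_mul g h x

def phi : DihedralGroup m →*
    ({s : Finset (Finset (ZMod m)) // Dissection m s} ≃o
     {s : Finset (Finset (ZMod m)) // Dissection m s}) :=
  MonoidHom.mk' autOf autOf_mul

lemma dissection_singleton {d : Finset (ZMod m)} (hd : IsDiag m d) : Dissection m {d} := by
  constructor
  · intro e he
    rw [Finset.mem_singleton] at he
    rwa [he]
  · intro d' hd' e' he' hne
    rw [Finset.mem_singleton] at hd' he'
    exact absurd (hd'.trans he'.symm) hne

lemma diag02 (hm : 5 ≤ m) : IsDiag m {(0 : ZMod m), 2} :=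
  ⟨0, 2, rfl, fun h => two_ne_zero' hm h.symm,
    fun h => three_ne_zero' hm (by linear_combination -h),
    fun h => one_ne_zero' hm (by linear_combination h)⟩

lemma diag13 (hm : 5 ≤ m) : IsDiag m {(1 : ZMod m), 3} :=
  ⟨1, 3, rfl, fun h => two_ne_zero' hm (by linear_combination -h),
    fun h => three_ne_zero' hm (by linear_combination -h),
    fun h => one_ne_zero' hm (by linear_combination h)⟩

lemma phi_inj (hm : 5 ≤ m) :
    Function.Injective (phi : DihedralGroup m →* _) := by
  refine (injective_iff_map_eq_one phi).2 ?_
  intro g hg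
  have key : ∀ (d : Finset (ZMod m)), IsDiag m d → d.image (vmap g) = d := by
    intro d hd
    have h1 := DFunLike.congr_fun hg ⟨{d}, dissection_singleton hd⟩
    have h2 : fmap (vmap g) {d} = {d} := Subtype.ext_iff.1 h1
    rw [fmap, Finset.image_singleton] at h2
    exact Finset.singleton_injective h2
  have h1 := key _ (diag02 hm)
  have h2 := key _ (diag13 hm)
  rw [image_pair] at h1 h2
  cases g with
  | r i =>
    have h1' : ({0 - i, 2 - i} : Finset (ZMod m)) = {0, 2} := h1
    rcases pair_eq_pair_iff.1 h1' with ⟨ha, hb⟩ | ⟨ha, hb⟩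
    · have hi : i = 0 := by linear_combination -ha
      rw [hi]
      exact DihedralGroup.one_def.symm
    · exact absurd (by linear_combination hb - ha : (4 : ZMod m) = 0) (four_ne_zero' hm)
  | sr i =>
    exfalso
    have h1' : ({i - 0, i - 2} : Finset (ZMod m)) = {0, 2} := h1
    rcases pair_eq_pair_iff.1 h1' with ⟨ha, hb⟩ | ⟨ha, hb⟩
    · exact absurd (by linear_combination ha - hb : (4 : ZMod m) = 0) (four_ne_zero' hm)
    · have hi : i = 2 := by linear_combination ha
      have h2' : ({i - 1, i - 3} : Finset (ZMod m)) = {1, 3} := h2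
      rcases pair_eq_pair_iff.1 h2' with ⟨hc, hd⟩ | ⟨hc, hd⟩
      · exact absurd (by linear_combination hi - hd : (4 : ZMod m) = 0) (four_ne_zero' hm)
      · exact absurd (by linear_combination hi - hc : (2 : ZMod m) = 0) (two_ne_zero' hm)

end Action

section Surj
variable {m : ℕ} [NeZero m]

local notation "DP" => {s : Finset (Finset (ZMod m)) // Dissection m s}

lemma dissection_subset {s t : Finset (Finset (ZMod m))} (h : t ⊆ s) (hs : Dissection m s) :
    Dissection m t :=
  ⟨fun d hd => hs.1 d (h hd), fun d hd e he hne => hs.2 d (h hd) e (h he) hne⟩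

lemma card_sub (u : DP) : Nat.card {t : DP // t.val ⊆ u.val} = 2 ^ u.val.card := by
  have E : {t : DP // t.val ⊆ u.val} ≃ {v : Finset (Finset (ZMod m)) // v ∈ u.val.powerset} :=
    { toFun := fun t => ⟨t.val.val, Finset.mem_powerset.2 t.prop⟩
      invFun := fun v => ⟨⟨v.val, dissection_subset (Finset.mem_powerset.1 v.prop) u.prop⟩,
        Finset.mem_powerset.1 v.prop⟩
      left_inv := fun t => by apply Subtype.ext; apply Subtype.ext; rfl
      right_inv := fun v => by apply Subtype.ext; rfl }
  rw [Nat.card_congr E, Nat.card_eq_fintype_card, Fintype.card_coe, Finset.card_powerset]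

lemma card_f (f : DP ≃o DP) (s : DP) : (f s).val.card = s.val.card := by
  have E2 : {t : DP // t.val ⊆ s.val} ≃ {t : DP // t.val ⊆ (f s).val} :=
    { toFun := fun t => ⟨f t.1, f.le_iff_le.2 t.prop⟩
      invFun := fun t => ⟨f.symm t.1, by
        have h : f.symm t.1 ≤ f.symm (f s) := f.symm.le_iff_le.2 t.prop
        rwa [OrderIso.symm_apply_apply] at h⟩
      left_inv := fun t => Subtype.ext (f.symm_apply_apply t.1)
      right_inv := fun t => Subtype.ext (f.apply_symm_apply t.1) }
  have key := Nat.card_congr E2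
  rw [card_sub, card_sub] at key
  exact (Nat.pow_right_injective (le_refl 2) key).symm

lemma exists_sig (f : DP ≃o DP) (d : Finset (ZMod m)) (hd : IsDiag m d) :
    ∃ e, (f ⟨{d}, dissection_singleton hd⟩).val = {e} := by
  apply Finset.card_eq_one.1
  rw [card_f]
  exact Finset.card_singleton d

open Classical in
noncomputable def sig (f : DP ≃o DP) (d : Finset (ZMod m)) : Finset (ZMod m) :=
  if hd : IsDiag m d then (exists_sig f d hd).choose else ∅

lemma sig_spec (f : DP ≃o DP) {d : Finset (ZMod m)} (hd : IsDiag m d) :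
    (f ⟨{d}, dissection_singleton hd⟩).val = {sig f d} := by
  classical
  rw [sig]
  rw [dif_pos hd]
  exact (exists_sig f d hd).choose_spec

lemma sig_diag (f : DP ≃o DP) {d : Finset (ZMod m)} (hd : IsDiag m d) :
    IsDiag m (sig f d) :=
  (f ⟨{d}, dissection_singleton hd⟩).prop.1 _
    (by rw [sig_spec f hd]; exact Finset.mem_singleton_self _)

lemma sig_inj (f : DP ≃o DP) {d e : Finset (ZMod m)} (hd : IsDiag m d) (he : IsDiag m e)
    (h : sig f d = sig f e) : d = e := by
  have h1 : f ⟨{d}, dissection_singleton hd⟩ = f ⟨{e}, dissection_singleton he⟩ :=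
    Subtype.ext (by rw [sig_spec f hd, sig_spec f he, h])
  have h2 := Subtype.ext_iff.1 (f.injective h1)
  exact Finset.singleton_injective h2

lemma sig_cancel (f : DP ≃o DP) {x : Finset (ZMod m)} (hx : IsDiag m x) :
    sig f (sig f.symm x) = x := by
  have h1 : f ⟨{sig f.symm x}, dissection_singleton (sig_diag f.symm hx)⟩ =
      ⟨{x}, dissection_singleton hx⟩ := by
    have h0 : (⟨{sig f.symm x}, dissection_singleton (sig_diag f.symm hx)⟩ : DP) =
        f.symm ⟨{x}, dissection_singleton hx⟩ := Subtype.ext (sig_spec f.symm hx).symm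
    rw [h0, OrderIso.apply_symm_apply]
  have h2 := sig_spec f (sig_diag f.symm hx)
  rw [h1] at h2
  exact (Finset.singleton_injective h2).symm

lemma sig_symm_cancel (f : DP ≃o DP) {x : Finset (ZMod m)} (hx : IsDiag m x) :
    sig f.symm (sig f x) = x := by
  have h := sig_cancel f.symm hx
  rwa [OrderIso.symm_symm] at h

lemma sig_mem (f : DP ≃o DP) (s : DP) {d : Finset (ZMod m)} (hd : d ∈ s.val) :
    sig f d ∈ (f s).val := by
  have h1 : (⟨{d}, dissection_singleton (s.prop.1 d hd)⟩ : DP) ≤ s :=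
    Finset.singleton_subset_iff.2 hd
  have h2 : (f ⟨{d}, dissection_singleton (s.prop.1 d hd)⟩).val ⊆ (f s).val :=
    f.le_iff_le.2 h1
  rw [sig_spec f (s.prop.1 d hd)] at h2
  exact h2 (Finset.mem_singleton_self _)

lemma f_val (f : DP ≃o DP) (s : DP) : (f s).val = s.val.image (sig f) := by
  symm
  apply Finset.eq_of_subset_of_card_le
  · intro x hx
    obtain ⟨d, hd, rfl⟩ := Finset.mem_image.1 hx
    exact sig_mem f s hd
  · rw [card_f, Finset.card_image_of_injOn
      (fun d hd e he hde => sig_inj f (s.prop.1 d hd) (s.prop.1 e he) hde)]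

lemma dissection_pair {d e : Finset (ZMod m)} (hd : IsDiag m d) (he : IsDiag m e)
    (hc : Compat m d e) : Dissection m {d, e} := by
  constructor
  · intro x hx
    rcases mem_pair.1 hx with h | h
    · rw [h]; exact hd
    · rw [h]; exact he
  · intro x hx y hy hne hcr
    rcases mem_pair.1 hx with h | h <;> rcases mem_pair.1 hy with h' | h'
    · exact hne (h.trans h'.symm)
    · rw [h, h'] at hcr; exact hc.1 hcr
    · rw [h, h'] at hcr; exact hc.2 hcr
    · exact hne (h.trans h'.symm)

lemma compat_of_dissection {d e : Finset (ZMod m)} (hne : d ≠ e)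
    (h : Dissection m {d, e}) : Compat m d e :=
  ⟨h.2 d (Finset.mem_insert_self _ _) e (by simp) hne,
   h.2 e (by simp) d (Finset.mem_insert_self _ _) hne.symm⟩

lemma f_pair (f : DP ≃o DP) {d e : Finset (ZMod m)} (hd : IsDiag m d) (he : IsDiag m e)
    (hc : Compat m d e) (hne : d ≠ e) :
    (f ⟨{d, e}, dissection_pair hd he hc⟩).val = {sig f d, sig f e} := by
  rw [f_val]
  show Finset.image (sig f) {d, e} = {sig f d, sig f e}
  rw [image_pair]

lemma sig_compat (f : DP ≃o DP) {d e : Finset (ZMod m)} (hd : IsDiag m d) (he : IsDiag m e)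
    (hne : d ≠ e) (hc : Compat m d e) : Compat m (sig f d) (sig f e) := by
  have hdis := (f ⟨{d, e}, dissection_pair hd he hc⟩).prop
  rw [f_pair f hd he hc hne] at hdis
  exact compat_of_dissection (fun h => hne (sig_inj f hd he h)) hdis

lemma sig_compat_iff (f : DP ≃o DP) {d e : Finset (ZMod m)} (hd : IsDiag m d)
    (he : IsDiag m e) (hne : d ≠ e) :
    Compat m (sig f d) (sig f e) ↔ Compat m d e := by
  constructor
  · intro h
    have h2 := sig_compat f.symm (sig_diag f hd) (sig_diag f he)
      (fun hh => hne (sig_inj f hd he hh)) h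
    rwa [sig_symm_cancel f hd, sig_symm_cancel f he] at h2
  · exact sig_compat f hd he hne

lemma not_compat_comm {d e : Finset (ZMod m)} : ¬ Compat m d e ↔ ¬ Compat m e d :=
  not_congr ⟨compat_comm, compat_comm⟩

lemma not_compat_shorts_iff (hm : 5 ≤ m) (j k : ZMod m) :
    ¬ Compat m {j - 1, j + 1} {k - 1, k + 1} ↔ (j = k - 1 ∨ j = k + 1) := by
  rw [not_compat_comm, not_compat_short_iff hm (isDiag_short hm k), mem_pair]

lemma sig_is_short (hm : 5 ≤ m) (f : DP ≃o DP) (j : ZMod m) :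
    IsShort m (sig f {j - 1, j + 1}) := by
  rw [short_char hm (sig_diag f (isDiag_short hm j))]
  intro e1 e2 he1 he2 hc1 hc2 hne
  have he1d := sig_diag f.symm he1
  have he2d := sig_diag f.symm he2
  have hcan1 := sig_cancel f he1
  have hcan2 := sig_cancel f he2
  set d : Finset (ZMod m) := {j - 1, j + 1} with hddef
  have hd : IsDiag m d := isDiag_short hm j
  have hde1 : d ≠ sig f.symm e1 := by
    intro hh
    apply hc1
    rw [hh, hcan1]
    exact compat_self he1
  have hde2 : d ≠ sig f.symm e2 := by
    intro hh
    apply hc2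
    rw [hh, hcan2]
    exact compat_self he2
  have hc1' : ¬ Compat m d (sig f.symm e1) := by
    intro hcc
    apply hc1
    have h := sig_compat f hd he1d hde1 hcc
    rwa [hcan1] at h
  have hc2' : ¬ Compat m d (sig f.symm e2) := by
    intro hcc
    apply hc2
    have h := sig_compat f hd he2d hde2 hcc
    rwa [hcan2] at h
  have hne' : sig f.symm e1 ≠ sig f.symm e2 := fun hh => hne (sig_inj f.symm he1 he2 hh)
  have hcmp := (short_char hm hd).1 ⟨j, hddef⟩ _ _ he1d he2d hc1' hc2' hne'
  have hres := sig_compat f he1d he2d hne' hcmp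
  rwa [hcan1, hcan2] at hres

noncomputable def tau (hm : 5 ≤ m) (f : DP ≃o DP) (j : ZMod m) : ZMod m :=
  (sig_is_short hm f j).choose

lemma tau_spec (hm : 5 ≤ m) (f : DP ≃o DP) (j : ZMod m) :
    sig f {j - 1, j + 1} = {tau hm f j - 1, tau hm f j + 1} :=
  (sig_is_short hm f j).choose_spec

lemma tau_inj (hm : 5 ≤ m) (f : DP ≃o DP) : Function.Injective (tau hm f) := by
  intro j k h
  apply short_inj hm
  apply sig_inj f (isDiag_short hm j) (isDiag_short hm k)
  rw [tau_spec hm f j, tau_spec hm f k, h]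

lemma tau_adj (hm : 5 ≤ m) (f : DP ≃o DP) (j k : ZMod m) :
    (j = k - 1 ∨ j = k + 1) ↔
      (tau hm f j = tau hm f k - 1 ∨ tau hm f j = tau hm f k + 1) := by
  by_cases hjk : j = k
  · subst hjk
    constructor
    · rintro (h | h)
      · exact absurd (by linear_combination h : (1 : ZMod m) = 0) (one_ne_zero' hm)
      · exact absurd (by linear_combination -h : (1 : ZMod m) = 0) (one_ne_zero' hm)
    · rintro (h | h)
      · exact absurd (by linear_combination h : (1 : ZMod m) = 0) (one_ne_zero' hm)
      · exact absurd (by linear_combination -h : (1 : ZMod m) = 0) (one_ne_zero' hm)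
  · have hne : ({j - 1, j + 1} : Finset (ZMod m)) ≠ {k - 1, k + 1} :=
      fun hh => hjk (short_inj hm hh)
    rw [← not_compat_shorts_iff hm j k, ← not_compat_shorts_iff hm (tau hm f j) (tau hm f k),
      ← tau_spec hm f j, ← tau_spec hm f k]
    exact (not_congr (sig_compat_iff f (isDiag_short hm j) (isDiag_short hm k) hne)).symm

lemma cycle_affine (hm : 5 ≤ m) (τ : ZMod m → ZMod m) (hinj : Function.Injective τ)
    (hadj : ∀ j k, (j = k - 1 ∨ j = k + 1) ↔ (τ j = τ k - 1 ∨ τ j = τ k + 1)) :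
    (∀ x, τ x = x + τ 0) ∨ (∀ x, τ x = -x + τ 0) := by
  have h10 := (hadj 1 0).1 (Or.inr (by rw [zero_add]))
  obtain ⟨ε, hε, h1⟩ : ∃ ε : ZMod m, (ε = 1 ∨ ε = -1) ∧ τ 1 = τ 0 + ε := by
    rcases h10 with h | h
    · exact ⟨-1, Or.inr rfl, by rw [h]; ring⟩
    · exact ⟨1, Or.inl rfl, by rw [h]⟩
  have key : ∀ k : ℕ, τ ((k : ZMod m)) = ε * (k : ZMod m) + τ 0 ∧
      τ ((k : ZMod m) + 1) = ε * ((k : ZMod m) + 1) + τ 0 := by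
    intro k
    induction k with
    | zero =>
      constructor
      · rw [Nat.cast_zero]; ring
      · rw [Nat.cast_zero, zero_add, h1]; ring
    | succ n ih =>
      have hfst : τ (((n + 1 : ℕ) : ZMod m)) = ε * ((n + 1 : ℕ) : ZMod m) + τ 0 := by
        push_cast
        exact ih.2
      refine ⟨hfst, ?_⟩
      set x : ZMod m := ((n + 1 : ℕ) : ZMod m) with hxdef
      have hx1 : x - 1 = (n : ZMod m) := by rw [hxdef]; push_cast; ring
      have hprev : τ (x - 1) = ε * (x - 1) + τ 0 := by rw [hx1]; exact ih.1
      have hadj2 := (hadj (x + 1) x).1 (Or.inr rfl)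
      have h2 : (2 : ZMod m) ≠ 0 := two_ne_zero' hm
      rcases hadj2 with h | h
      · rcases hε with rfl | rfl
        · exfalso
          have hcol : τ (x + 1) = τ (x - 1) := by rw [h, hprev, hfst]; ring
          exact h2 (by linear_combination hinj hcol)
        · rw [h, hfst]; ring
      · rcases hε with rfl | rfl
        · rw [h, hfst]; ring
        · exfalso
          have hcol : τ (x + 1) = τ (x - 1) := by rw [h, hprev, hfst]; ring
          exact h2 (by linear_combination hinj hcol)
  have main : ∀ x : ZMod m, τ x = ε * x + τ 0 := by
    intro x
    have h := (key x.val).1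
    rwa [ZMod.natCast_zmod_val] at h
  rcases hε with rfl | rfl
  · left; intro x; rw [main x]; ring
  · right; intro x; rw [main x]; ring

lemma sig_eq_image (hm : 5 ≤ m) (f : DP ≃o DP) {d : Finset (ZMod m)} (hd : IsDiag m d)
    (p q : ZMod m → ZMod m) (hp : ∀ j, tau hm f j = p j)
    (hqp : ∀ x, q (p x) = x) (hpq : ∀ x, p (q x) = x) :
    sig f d = d.image p := by
  ext k
  rw [Finset.mem_image]
  have hq : sig f {q k - 1, q k + 1} = {k - 1, k + 1} := by
    rw [tau_spec hm f (q k), hp (q k), hpq k]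
  have hk : k ∈ sig f d ↔ ¬ Compat m (sig f d) {k - 1, k + 1} :=
    (not_compat_short_iff hm (sig_diag f hd)).symm
  have hmid : ¬ Compat m (sig f d) {k - 1, k + 1} ↔ ¬ Compat m d {q k - 1, q k + 1} := by
    by_cases hdq : d = {q k - 1, q k + 1}
    · constructor
      · intro hcc
        exfalso
        apply hcc
        rw [hdq, hq]
        exact compat_self (isDiag_short hm k)
      · intro hcc
        exfalso
        apply hcc
        rw [hdq]
        exact compat_self (isDiag_short hm (q k))
    · rw [← hq]
      exact not_congr (sig_compat_iff f hd (isDiag_short hm (q k)) hdq)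
  rw [hk, hmid, not_compat_short_iff hm hd]
  constructor
  · intro h
    exact ⟨q k, h, hpq k⟩
  · rintro ⟨x, hx, rfl⟩
    rwa [hqp x]

lemma phi_surj (hm : 5 ≤ m) :
    Function.Surjective (phi : DihedralGroup m →* (DP ≃o DP)) := by
  intro f
  have main : ∀ g : DihedralGroup m, (∀ j, tau hm f j = vmap g j) → phi g = f := by
    intro g hg
    refine DFunLike.ext _ _ fun s => ?_
    apply Subtype.ext
    show fmap (vmap g) s.val = (f s).val
    rw [f_val f s, fmap]
    exact Finset.image_congr fun d hd =>
      (sig_eq_image hm f (s.prop.1 d hd) (vmap g) (vmap g⁻¹) hg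
        (vmap_inv_left g) (vmap_inv_right g)).symm
  rcases cycle_affine hm (tau hm f) (tau_inj hm f) (tau_adj hm f) with hc | hc
  · exact ⟨DihedralGroup.r (-(tau hm f 0)), main _ (fun j => by
      rw [hc j]; show j + tau hm f 0 = j - -(tau hm f 0); ring)⟩
  · exact ⟨DihedralGroup.sr (tau hm f 0), main _ (fun j => by
      rw [hc j]; show -j + tau hm f 0 = tau hm f 0 - j; ring)⟩

end Surj

section Assemble

def dualAutMulEquiv (α : Type*) [Preorder α] : ((αᵒᵈ ≃o αᵒᵈ)) ≃* (α ≃o α) where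
  toFun f := (OrderIso.dualDual α).trans (f.dual.trans (OrderIso.dualDual α).symm)
  invFun g := g.dual
  left_inv f := by
    apply DFunLike.ext
    intro x
    rfl
  right_inv g := by
    apply DFunLike.ext
    intro x
    rfl
  map_mul' f g := by
    apply DFunLike.ext
    intro x
    rfl

end Assemble


/-- For `n ≥ 2`, the automorphism group of the face lattice of
the associahedron `A_n` — order automorphisms of the poset of dissections of
the `(n+3)`-gon ordered by reverse inclusion — is isomorphic to the dihedral
group `D_{n+3}` of order `2(n+3)`. -/
theorem associahedron_aut_group (n : ℕ) (hn : 2 ≤ n) :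
    Nonempty
      ((({s : Finset (Finset (ZMod (n + 3))) // Dissection (n + 3) s}ᵒᵈ) ≃o
        ({s : Finset (Finset (ZMod (n + 3))) // Dissection (n + 3) s}ᵒᵈ)) ≃*
        DihedralGroup (n + 3)) := by
  haveI : NeZero (n + 3) := ⟨by omega⟩
  have hm : 5 ≤ n + 3 := by omega
  have hbij : Function.Bijective (phi : DihedralGroup (n + 3) →* _) :=
    ⟨phi_inj hm, phi_surj hm⟩
  exact ⟨(dualAutMulEquiv _).trans (MulEquiv.ofBijective _ hbij).symm⟩

end Colorful
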